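/- Let r > 3/2, tau >= 0, gamma >= 0. For functions f, g on T^3 write k = (k', k_3) with k' in 2\pi Z^2 and k_3 in 2\pi Z, and define the anisotropic Gevrey norm ||h||_{tau,r,gamma,r}^2 = sum_k (1 + |k'|^{2r} + |k_3|^{2r}) e^{2 tau |k'|} e^{2 gamma |k_3|} |\hat{h}_k|^2. Then ||f g||_{tau,r,gamma,r} <= C_r ||f||_{tau,r,gamma,r} ||g||_{tau,r,gamma,r}, so the corresponding space is a Banach algebra. -/

import Mathlib

open scoped ENNReal

/-- Euclidean norm of a horizontal lattice frequency `k' ∈ 2πℤ²`. -/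
noncomputable def hnorm (k' : Fin 2 → ℤ) : ℝ :=
  Real.sqrt (∑ a, ((2 * Real.pi) * (k' a : ℝ)) ^ 2)

/-- Absolute value of a vertical lattice frequency `k₃ ∈ 2πℤ`. -/
noncomputable def vnorm (k₃ : ℤ) : ℝ := |(2 * Real.pi) * (k₃ : ℝ)|

/-- Anisotropic Gevrey norm `‖f‖_{τ,r,γ,r}` of a function on `𝕋³` with Fourier
coefficients `c` indexed by `(k', k₃) ∈ 2π(ℤ² × ℤ)`. -/
noncomputable def anisoNorm (τ γ r : ℝ) (c : (Fin 2 → ℤ) × ℤ → ℂ) : ℝ≥0∞ :=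
  (∑' k : (Fin 2 → ℤ) × ℤ, ENNReal.ofReal
      ((1 + (hnorm k.1) ^ (2 * r) + (vnorm k.2) ^ (2 * r))
        * Real.exp (2 * τ * hnorm k.1) * Real.exp (2 * γ * vnorm k.2)
        * ‖c k‖ ^ 2)) ^ (1 / 2 : ℝ)

/-- Fourier coefficients of a product: convolution of the coefficients. -/
noncomputable def fconv (c d : (Fin 2 → ℤ) × ℤ → ℂ) (k : (Fin 2 → ℤ) × ℤ) : ℂ :=
  ∑' j, c j * d (k - j)

namespace AnisoAux

open MeasureTheory

abbrev Ix : Type := (Fin 2 → ℤ) × ℤ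

/-! ### Elementary facts about `hnorm` and `vnorm` -/

lemma hnorm_nonneg (x : Fin 2 → ℤ) : 0 ≤ hnorm x := Real.sqrt_nonneg _
lemma vnorm_nonneg (x : ℤ) : 0 ≤ vnorm x := abs_nonneg _

lemma hnorm_triangle (x y : Fin 2 → ℤ) : hnorm (x + y) ≤ hnorm x + hnorm y := by
  have key : ∀ z : Fin 2 → ℤ, hnorm z
      = ‖(WithLp.equiv 2 (Fin 2 → ℝ)).symm (fun a => (2 * Real.pi) * (z a : ℝ))‖ := by
    intro z
    rw [EuclideanSpace.norm_eq]
    unfold hnorm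
    congr 1
    refine Finset.sum_congr rfl fun a _ => ?_
    simp only [WithLp.equiv_symm_apply, PiLp.toLp_apply, Real.norm_eq_abs, sq_abs]
  rw [key, key, key]
  have hfun : (fun a => (2 * Real.pi) * (((x+y) a : ℤ) : ℝ))
      = (fun a => (2 * Real.pi) * ((x a : ℤ) : ℝ)) + (fun a => (2 * Real.pi) * ((y a : ℤ) : ℝ)) := by
    funext a
    simp only [Pi.add_apply]
    push_cast
    ring
  rw [hfun]
  exact norm_add_le ((WithLp.equiv 2 (Fin 2 → ℝ)).symm _) ((WithLp.equiv 2 (Fin 2 → ℝ)).symm _)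

lemma vnorm_triangle (x y : ℤ) : vnorm (x + y) ≤ vnorm x + vnorm y := by
  unfold vnorm
  push_cast
  rw [mul_add]
  exact abs_add_le _ _

lemma hnorm_ge_abs (x : Fin 2 → ℤ) (a : Fin 2) : |(x a : ℝ)| ≤ hnorm x := by
  have h1 : |(x a : ℝ)| ≤ |2 * Real.pi * (x a : ℝ)| := by
    rw [abs_mul]
    nlinarith [abs_nonneg ((x a : ℝ)), abs_of_pos (by positivity : (0:ℝ) < 2 * Real.pi),
      Real.pi_gt_three]
  refine h1.trans ?_
  rw [← Real.sqrt_sq_eq_abs]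
  apply Real.sqrt_le_sqrt
  have := Finset.single_le_sum (f := fun b => (2 * Real.pi * (x b : ℝ)) ^ 2)
    (fun b _ => sq_nonneg _) (Finset.mem_univ a)
  simpa using this

lemma vnorm_ge_abs (x : ℤ) : |(x : ℝ)| ≤ vnorm x := by
  unfold vnorm
  rw [abs_mul]
  nlinarith [abs_nonneg ((x : ℝ)), abs_of_pos (by positivity : (0:ℝ) < 2 * Real.pi),
    Real.pi_gt_three]

/-- `(a+b)^s ≤ 2^s (a^s + b^s)` for nonneg reals. -/
lemma add_rpow_le (a b : ℝ) {s : ℝ} (ha : 0 ≤ a) (hb : 0 ≤ b) (hs : 0 ≤ s) :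
    (a + b) ^ s ≤ 2 ^ s * (a ^ s + b ^ s) := by
  have h1 : a + b ≤ 2 * max a b := by
    rcases le_total a b with h | h
    · rw [max_eq_right h]; linarith
    · rw [max_eq_left h]; linarith
  calc (a + b) ^ s ≤ (2 * max a b) ^ s :=
        Real.rpow_le_rpow (by linarith) h1 hs
    _ = 2 ^ s * (max a b) ^ s := Real.mul_rpow (by norm_num) (le_max_of_le_left ha)
    _ ≤ 2 ^ s * (a ^ s + b ^ s) := by
        have : (max a b) ^ s ≤ a ^ s + b ^ s := by
          rcases le_total a b with h | h
          · rw [max_eq_right h]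
            exact le_add_of_nonneg_left (Real.rpow_nonneg ha _)
          · rw [max_eq_left h]
            exact le_add_of_nonneg_right (Real.rpow_nonneg hb _)
        have h2 : (0:ℝ) ≤ 2 ^ s := Real.rpow_nonneg (by norm_num) _
        nlinarith

/-! ### ENNReal helpers -/

lemma rpow_half_sq (x : ℝ≥0∞) : (x ^ (1/2:ℝ)) ^ (2:ℝ) = x := by
  rw [← ENNReal.rpow_mul]
  norm_num

lemma rpow_half_mul_self (x : ℝ≥0∞) : x ^ (1/2:ℝ) * x ^ (1/2:ℝ) = x := by
  rw [← ENNReal.rpow_add_of_nonneg _ _ (by norm_num) (by norm_num)]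
  norm_num

lemma ennreal_mul_le_sq_add_sq (a b : ℝ≥0∞) : a * b ≤ a * a + b * b := by
  rcases le_total a b with h | h
  · exact le_add_left (mul_le_mul_left h b)
  · exact le_add_right (mul_le_mul_right h a)

lemma sq_add_le_three (X Y : ℝ≥0∞) : (X + Y) ^ (2:ℝ) ≤ 3 * (X ^ (2:ℝ) + Y ^ (2:ℝ)) := by
  rw [ENNReal.rpow_two, ENNReal.rpow_two, ENNReal.rpow_two]
  have expand : (X + Y) ^ 2 = X * X + (X * Y + Y * X) + Y * Y := by ring
  rw [expand]
  have h1 : X * Y ≤ X * X + Y * Y := ennreal_mul_le_sq_add_sq X Y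
  have h2 : Y * X ≤ Y * Y + X * X := ennreal_mul_le_sq_add_sq Y X
  have hstep : X * X + (X * Y + Y * X) + Y * Y
      ≤ X * X + ((X * X + Y * Y) + (Y * Y + X * X)) + Y * Y := by gcongr
  refine hstep.trans ?_
  have : (3:ℝ≥0∞) * (X ^ 2 + Y ^ 2) = X*X + ((X*X + Y*Y) + (Y*Y + X*X)) + Y*Y := by ring
  rw [this]

lemma sqrt_add_le (x y : ℝ≥0∞) : (x + y) ^ (1/2:ℝ) ≤ x ^ (1/2:ℝ) + y ^ (1/2:ℝ) :=
  ENNReal.rpow_add_le_add_rpow x y (by norm_num) (by norm_num)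

/-- Cauchy–Schwarz for ENNReal tsums. -/
lemma tsum_CS {ι : Type*} [Countable ι] [MeasurableSpace ι] [MeasurableSingletonClass ι]
    (f g : ι → ℝ≥0∞) :
    ∑' i, f i * g i ≤ (∑' i, f i ^ (2:ℝ)) ^ (1/2:ℝ) * (∑' i, g i ^ (2:ℝ)) ^ (1/2:ℝ) := by
  have h2 : (2:ℝ).HolderConjugate 2 := Real.holderConjugate_iff.mpr ⟨one_lt_two, by norm_num⟩
  have h := ENNReal.lintegral_mul_le_Lp_mul_Lq (Measure.count : Measure ι)
    h2 (f := f) (g := g) (Measurable.of_discrete.aemeasurable) (Measurable.of_discrete.aemeasurable)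
  simpa [MeasureTheory.lintegral_count] using h

/-- Squared Cauchy–Schwarz. -/
lemma tsum_CS_sq {ι : Type*} [Countable ι] [MeasurableSpace ι] [MeasurableSingletonClass ι]
    (f g : ι → ℝ≥0∞) :
    (∑' i, f i * g i) ^ (2:ℝ) ≤ (∑' i, f i ^ (2:ℝ)) * (∑' i, g i ^ (2:ℝ)) := by
  calc (∑' i, f i * g i) ^ (2:ℝ)
      ≤ ((∑' i, f i ^ (2:ℝ)) ^ (1/2:ℝ) * (∑' i, g i ^ (2:ℝ)) ^ (1/2:ℝ)) ^ (2:ℝ) :=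
        ENNReal.rpow_le_rpow (tsum_CS f g) (by norm_num)
    _ = (∑' i, f i ^ (2:ℝ)) * (∑' i, g i ^ (2:ℝ)) := by
        rw [ENNReal.mul_rpow_of_nonneg _ _ (by norm_num : (0:ℝ) ≤ 2), rpow_half_sq, rpow_half_sq]

/-! ### Convolution estimates -/

section Conv

variable {G : Type*} [AddCommGroup G] [Countable G] [MeasurableSpace G]
  [MeasurableSingletonClass G]

omit [Countable G] [MeasurableSpace G] [MeasurableSingletonClass G] in
lemma tsum_translate (g : G → ℝ≥0∞) (j : G) : ∑' k, g (k - j) = ∑' k, g k :=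
  (Equiv.subRight j).tsum_eq g

omit [Countable G] [MeasurableSpace G] [MeasurableSingletonClass G] in
lemma conv_comm (f g : G → ℝ≥0∞) (k : G) :
    ∑' j, f j * g (k - j) = ∑' j, g j * f (k - j) := by
  rw [← (Equiv.subLeft k).tsum_eq (fun j => g j * f (k - j))]
  refine tsum_congr fun j => ?_
  simp [Equiv.subLeft, sub_sub_cancel, mul_comm]

/-- Young `ℓ¹ * ℓ² → ℓ²` (squared form), first argument in `ℓ¹`. -/
lemma conv_sq (f g : G → ℝ≥0∞) :
    ∑' k, (∑' j, f j * g (k - j)) ^ (2:ℝ)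
      ≤ (∑' j, f j) ^ (2:ℝ) * ∑' j, g j ^ (2:ℝ) := by
  have step1 : ∀ k : G, (∑' j, f j * g (k - j)) ^ (2:ℝ)
      ≤ (∑' j, f j) * ∑' j, f j * g (k - j) ^ (2:ℝ) := by
    intro k
    have hxy : ∀ j, f j * g (k - j) = f j ^ (1/2:ℝ) * (f j ^ (1/2:ℝ) * g (k - j)) := by
      intro j
      rw [← mul_assoc, rpow_half_mul_self]
    calc (∑' j, f j * g (k - j)) ^ (2:ℝ)
        = (∑' j, f j ^ (1/2:ℝ) * (f j ^ (1/2:ℝ) * g (k - j))) ^ (2:ℝ) := by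
          rw [tsum_congr hxy]
      _ ≤ (∑' j, (f j ^ (1/2:ℝ)) ^ (2:ℝ)) * ∑' j, (f j ^ (1/2:ℝ) * g (k - j)) ^ (2:ℝ) :=
          tsum_CS_sq _ _
      _ = (∑' j, f j) * ∑' j, f j * g (k - j) ^ (2:ℝ) := by
          congr 1
          · exact tsum_congr fun j => rpow_half_sq _
          · refine tsum_congr fun j => ?_
            rw [ENNReal.mul_rpow_of_nonneg _ _ (by norm_num : (0:ℝ) ≤ 2), rpow_half_sq]
  calc ∑' k, (∑' j, f j * g (k - j)) ^ (2:ℝ)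
      ≤ ∑' k, (∑' j, f j) * ∑' j, f j * g (k - j) ^ (2:ℝ) := ENNReal.tsum_le_tsum step1
    _ = (∑' j, f j) * ∑' k, ∑' j, f j * g (k - j) ^ (2:ℝ) := ENNReal.tsum_mul_left
    _ = (∑' j, f j) * ∑' j, ∑' k, f j * g (k - j) ^ (2:ℝ) := by rw [ENNReal.tsum_comm]
    _ = (∑' j, f j) * ∑' j, f j * ∑' k, g (k - j) ^ (2:ℝ) := by
        congr 1
        exact tsum_congr fun j => ENNReal.tsum_mul_left
    _ = (∑' j, f j) * ∑' j, f j * ∑' k, g k ^ (2:ℝ) := by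
        congr 1
        exact tsum_congr fun j => by rw [tsum_translate (fun k => g k ^ (2:ℝ)) j]
    _ = (∑' j, f j) ^ (2:ℝ) * ∑' j, g j ^ (2:ℝ) := by
        rw [ENNReal.tsum_mul_right, ENNReal.rpow_two]
        ring

end Conv

/-! ### The weights -/

noncomputable def P (r : ℝ) (k : Ix) : ℝ :=
  1 + hnorm k.1 ^ (2 * r) + vnorm k.2 ^ (2 * r)

noncomputable def E (τ γ : ℝ) (k : Ix) : ℝ :=
  Real.exp (2 * τ * hnorm k.1) * Real.exp (2 * γ * vnorm k.2)

lemma P_one_le (r : ℝ) (k : Ix) : 1 ≤ P r k := by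
  have h1 : 0 ≤ hnorm k.1 ^ (2 * r) := Real.rpow_nonneg (hnorm_nonneg _) _
  have h2 : 0 ≤ vnorm k.2 ^ (2 * r) := Real.rpow_nonneg (vnorm_nonneg _) _
  unfold P; linarith

lemma P_pos (r : ℝ) (k : Ix) : 0 < P r k := lt_of_lt_of_le one_pos (P_one_le r k)

lemma E_pos (τ γ : ℝ) (k : Ix) : 0 < E τ γ k := mul_pos (Real.exp_pos _) (Real.exp_pos _)

lemma P_split (r : ℝ) (hr : 0 ≤ r) (j l : Ix) :
    P r (j + l) ≤ 2 ^ (2 * r) * (P r j + P r l) := by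
  have hs : (0:ℝ) ≤ 2 * r := by linarith
  have hh : hnorm (j + l).1 ^ (2*r) ≤ 2 ^ (2*r) * (hnorm j.1 ^ (2*r) + hnorm l.1 ^ (2*r)) := by
    calc hnorm (j + l).1 ^ (2*r) ≤ (hnorm j.1 + hnorm l.1) ^ (2*r) :=
          Real.rpow_le_rpow (hnorm_nonneg _) (hnorm_triangle j.1 l.1) hs
      _ ≤ _ := add_rpow_le _ _ (hnorm_nonneg _) (hnorm_nonneg _) hs
  have hv : vnorm (j + l).2 ^ (2*r) ≤ 2 ^ (2*r) * (vnorm j.2 ^ (2*r) + vnorm l.2 ^ (2*r)) := by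
    calc vnorm (j + l).2 ^ (2*r) ≤ (vnorm j.2 + vnorm l.2) ^ (2*r) :=
          Real.rpow_le_rpow (vnorm_nonneg _) (vnorm_triangle j.2 l.2) hs
      _ ≤ _ := add_rpow_le _ _ (vnorm_nonneg _) (vnorm_nonneg _) hs
  have h1 : (1:ℝ) ≤ 2 ^ (2*r) := by
    calc (1:ℝ) = 2 ^ (0:ℝ) := (Real.rpow_zero 2).symm
      _ ≤ 2 ^ (2*r) := Real.rpow_le_rpow_of_exponent_le (by norm_num) hs
  have hj1 : 0 ≤ hnorm j.1 ^ (2*r) := Real.rpow_nonneg (hnorm_nonneg _) _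
  have hj2 : 0 ≤ vnorm j.2 ^ (2*r) := Real.rpow_nonneg (vnorm_nonneg _) _
  have hl1 : 0 ≤ hnorm l.1 ^ (2*r) := Real.rpow_nonneg (hnorm_nonneg _) _
  have hl2 : 0 ≤ vnorm l.2 ^ (2*r) := Real.rpow_nonneg (vnorm_nonneg _) _
  unfold P
  nlinarith [hh, hv, h1, hj1, hj2, hl1, hl2]

lemma E_split (τ γ : ℝ) (hτ : 0 ≤ τ) (hγ : 0 ≤ γ) (j l : Ix) :
    E τ γ (j + l) ≤ E τ γ j * E τ γ l := by
  have h1 : Real.exp (2 * τ * hnorm (j + l).1)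
      ≤ Real.exp (2 * τ * hnorm j.1) * Real.exp (2 * τ * hnorm l.1) := by
    rw [← Real.exp_add]
    apply Real.exp_le_exp.mpr
    have h := hnorm_triangle j.1 l.1
    rw [Prod.fst_add]
    nlinarith
  have h2 : Real.exp (2 * γ * vnorm (j + l).2)
      ≤ Real.exp (2 * γ * vnorm j.2) * Real.exp (2 * γ * vnorm l.2) := by
    rw [← Real.exp_add]
    apply Real.exp_le_exp.mpr
    have h := vnorm_triangle j.2 l.2
    rw [Prod.snd_add]
    nlinarith
  calc E τ γ (j+l) ≤ (Real.exp (2*τ*hnorm j.1) * Real.exp (2*τ*hnorm l.1))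
        * (Real.exp (2*γ*vnorm j.2) * Real.exp (2*γ*vnorm l.2)) := by
        unfold E
        exact mul_le_mul h1 h2 (Real.exp_pos _).le (by positivity)
    _ = E τ γ j * E τ γ l := by unfold E; ring

noncomputable def w (τ γ r : ℝ) (k : Ix) : ℝ≥0∞ := ENNReal.ofReal (P r k * E τ γ k)
noncomputable def u (τ γ : ℝ) (k : Ix) : ℝ≥0∞ := ENNReal.ofReal (E τ γ k)
noncomputable def sw (τ γ r : ℝ) (k : Ix) : ℝ≥0∞ := w τ γ r k ^ (1/2:ℝ)
noncomputable def su (τ γ : ℝ) (k : Ix) : ℝ≥0∞ := u τ γ k ^ (1/2:ℝ)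

variable {τ γ r : ℝ}

lemma sw_sq (k : Ix) : sw τ γ r k ^ (2:ℝ) = w τ γ r k := rpow_half_sq _

lemma w_split (hr : 0 ≤ r) (hτ : 0 ≤ τ) (hγ : 0 ≤ γ) (k j : Ix) :
    w τ γ r k ≤ ENNReal.ofReal (2 ^ (2 * r))
      * (w τ γ r j * u τ γ (k - j) + u τ γ j * w τ γ r (k - j)) := by
  set l := k - j with hl
  have hk : k = j + l := by rw [hl]; abel
  have hreal : P r k * E τ γ k
      ≤ 2 ^ (2*r) * ((P r j * E τ γ j) * E τ γ l + E τ γ j * (P r l * E τ γ l)) := by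
    have h1 : P r k ≤ 2 ^ (2*r) * (P r j + P r l) := by rw [hk]; exact P_split r hr j l
    have h2 : E τ γ k ≤ E τ γ j * E τ γ l := by rw [hk]; exact E_split τ γ hτ hγ j l
    have := mul_le_mul h1 h2 (E_pos τ γ k).le
      (mul_nonneg (Real.rpow_nonneg (by norm_num) _)
        (add_nonneg (P_pos r j).le (P_pos r l).le))
    calc P r k * E τ γ k ≤ 2 ^ (2*r) * (P r j + P r l) * (E τ γ j * E τ γ l) := this
      _ = 2 ^ (2*r) * ((P r j * E τ γ j) * E τ γ l + E τ γ j * (P r l * E τ γ l)) := by ring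
  calc w τ γ r k
      ≤ ENNReal.ofReal (2 ^ (2*r) * ((P r j * E τ γ j) * E τ γ l + E τ γ j * (P r l * E τ γ l))) :=
        ENNReal.ofReal_le_ofReal hreal
    _ = ENNReal.ofReal (2 ^ (2*r)) * (w τ γ r j * u τ γ l + u τ γ j * w τ γ r l) := by
        unfold w u
        rw [ENNReal.ofReal_mul (Real.rpow_nonneg (by norm_num) _)]
        congr 1
        rw [ENNReal.ofReal_add
          (mul_nonneg (mul_nonneg (P_pos r j).le (E_pos τ γ j).le) (E_pos τ γ l).le)
          (mul_nonneg (E_pos τ γ j).le (mul_nonneg (P_pos r l).le (E_pos τ γ l).le))]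
        congr 1
        · rw [ENNReal.ofReal_mul (mul_nonneg (P_pos r j).le (E_pos τ γ j).le)]
        · rw [ENNReal.ofReal_mul (E_pos τ γ j).le]

lemma sw_split (hr : 0 ≤ r) (hτ : 0 ≤ τ) (hγ : 0 ≤ γ) (k j : Ix) :
    sw τ γ r k ≤ ENNReal.ofReal (2 ^ (2 * r)) ^ (1/2:ℝ)
      * (sw τ γ r j * su τ γ (k - j) + su τ γ j * sw τ γ r (k - j)) := by
  have h := ENNReal.rpow_le_rpow (w_split hr hτ hγ k j) (by norm_num : (0:ℝ) ≤ 1/2)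
  refine h.trans ?_
  rw [ENNReal.mul_rpow_of_nonneg _ _ (by norm_num : (0:ℝ) ≤ 1/2)]
  apply mul_le_mul_right
  refine (sqrt_add_le _ _).trans ?_
  rw [ENNReal.mul_rpow_of_nonneg _ _ (by norm_num : (0:ℝ) ≤ 1/2),
    ENNReal.mul_rpow_of_nonneg _ _ (by norm_num : (0:ℝ) ≤ 1/2)]
  exact le_refl _

/-- ℓ¹ bound via Cauchy-Schwarz. -/
lemma l1_bound (b : Ix → ℝ≥0∞) :
    (∑' k, su τ γ k * b k) ^ (2:ℝ)
      ≤ (∑' k : Ix, (ENNReal.ofReal (P r k))⁻¹) * ∑' k, w τ γ r k * b k ^ (2:ℝ) := by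
  set q : Ix → ℝ≥0∞ := fun k => (ENNReal.ofReal (P r k))⁻¹ ^ (1/2:ℝ) with hq
  have key : ∀ k, su τ γ k = q k * sw τ γ r k := by
    intro k
    have hsplit : w τ γ r k = ENNReal.ofReal (P r k) * u τ γ k := by
      unfold w u
      rw [← ENNReal.ofReal_mul (P_pos r k).le]
    rw [hq]
    show su τ γ k = (ENNReal.ofReal (P r k))⁻¹ ^ (1/2:ℝ) * w τ γ r k ^ (1/2:ℝ)
    rw [hsplit, ENNReal.mul_rpow_of_nonneg _ _ (by norm_num : (0:ℝ) ≤ 1/2), ← mul_assoc,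
      ← ENNReal.mul_rpow_of_nonneg _ _ (by norm_num : (0:ℝ) ≤ 1/2),
      ENNReal.inv_mul_cancel (by simp [P_pos r k]) ENNReal.ofReal_ne_top,
      ENNReal.one_rpow, one_mul]
    rfl
  have hCS := tsum_CS q (fun k => sw τ γ r k * b k)
  calc (∑' k, su τ γ k * b k) ^ (2:ℝ)
      = (∑' k, q k * (sw τ γ r k * b k)) ^ (2:ℝ) := by
        congr 1
        exact tsum_congr fun k => by rw [key k, mul_assoc]
    _ ≤ ((∑' k, q k ^ (2:ℝ)) ^ (1/2:ℝ) * (∑' k, (sw τ γ r k * b k) ^ (2:ℝ)) ^ (1/2:ℝ)) ^ (2:ℝ) :=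
        ENNReal.rpow_le_rpow hCS (by norm_num)
    _ = (∑' k, q k ^ (2:ℝ)) * ∑' k, (sw τ γ r k * b k) ^ (2:ℝ) := by
        rw [ENNReal.mul_rpow_of_nonneg _ _ (by norm_num : (0:ℝ) ≤ 2), rpow_half_sq, rpow_half_sq]
    _ = (∑' k : Ix, (ENNReal.ofReal (P r k))⁻¹) * ∑' k, w τ γ r k * b k ^ (2:ℝ) := by
        congr 1
        · exact tsum_congr fun k => rpow_half_sq _
        · refine tsum_congr fun k => ?_
          rw [ENNReal.mul_rpow_of_nonneg _ _ (by norm_num : (0:ℝ) ≤ 2), sw_sq]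

/-! ### Summability of the inverse polynomial weight -/

noncomputable def g (s : ℝ) (n : ℤ) : ℝ≥0∞ := ENNReal.ofReal ((1 + |(n:ℝ)|) ^ (-s))

lemma G_lt_top {s : ℝ} (hs : 1 < s) : ∑' n : ℤ, g s n < ⊤ := by
  have hnat : Summable (fun n : ℕ => (1 + (n:ℝ)) ^ (-s)) := by
    have h0 : Summable (fun n : ℕ => ((n:ℝ)) ^ (-s)) :=
      Real.summable_nat_rpow.mpr (by linarith)
    have h1 := h0.comp_injective (add_left_injective 1)
    refine h1.congr fun n => ?_
    show (((n + 1 : ℕ) : ℝ)) ^ (-s) = (1 + (n:ℝ)) ^ (-s)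
    push_cast
    rw [add_comm]
  have hsum : Summable (fun n : ℤ => (1 + |(n:ℝ)|) ^ (-s)) := by
    refine Summable.of_nat_of_neg ?_ ?_
    · refine hnat.congr fun n => ?_
      congr 1
      simp
    · refine hnat.congr fun n => ?_
      congr 1
      push_cast
      simp
  have heq := ENNReal.ofReal_tsum_of_nonneg
    (fun n => Real.rpow_nonneg (by positivity) _) hsum
  unfold g
  rw [← heq]
  exact ENNReal.ofReal_lt_top

lemma P_lower (r : ℝ) (hr : 0 ≤ r) (k : Ix) :
    ((1 + |(k.1 0 : ℝ)|) * (1 + |(k.1 1 : ℝ)|) * (1 + |(k.2 : ℝ)|)) ^ (2 * r / 3)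
      ≤ 2 ^ (2 * r) * P r k := by
  set t := 2 * r with htdef
  have ht : 0 ≤ t := by positivity
  set m1 := |(k.1 0 : ℝ)| with hm1
  set m2 := |(k.1 1 : ℝ)| with hm2
  set m3 := |(k.2 : ℝ)| with hm3
  have hm1n : 0 ≤ m1 := abs_nonneg _
  have hm2n : 0 ≤ m2 := abs_nonneg _
  have hm3n : 0 ≤ m3 := abs_nonneg _
  set M := max m1 (max m2 m3) with hM
  have hMn : 0 ≤ M := le_max_of_le_left hm1n
  have hprod : (1 + m1) * (1 + m2) * (1 + m3) ≤ (1 + M) ^ (3:ℕ) := by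
    have h1 : 1 + m1 ≤ 1 + M := by simp [hM]
    have h2 : 1 + m2 ≤ 1 + M := by
      have : m2 ≤ M := le_max_of_le_right (le_max_left _ _)
      linarith
    have h3 : 1 + m3 ≤ 1 + M := by
      have : m3 ≤ M := le_max_of_le_right (le_max_right _ _)
      linarith
    calc (1 + m1) * (1 + m2) * (1 + m3) ≤ (1 + M) * (1 + M) * (1 + M) := by
          apply mul_le_mul (mul_le_mul h1 h2 (by linarith) (by linarith)) h3 (by linarith)
          positivity
      _ = (1 + M) ^ (3:ℕ) := by ring
  have hstep2 : ((1 + m1) * (1 + m2) * (1 + m3)) ^ (t / 3) ≤ (1 + M) ^ t := by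
    calc ((1 + m1) * (1 + m2) * (1 + m3)) ^ (t / 3)
        ≤ ((1 + M) ^ (3:ℕ)) ^ (t / 3) :=
          Real.rpow_le_rpow (by positivity) hprod (by positivity)
      _ = (1 + M) ^ t := by
          rw [← Real.rpow_natCast (1 + M) 3, ← Real.rpow_mul (by linarith)]
          congr 1
          ring
  have hstep3 : (1 + M) ^ t ≤ 2 ^ t * max 1 (M ^ t) := by
    have h1 : 1 + M ≤ 2 * max 1 M := by
      rcases le_total M 1 with h | h
      · rw [max_eq_left h]; linarith
      · rw [max_eq_right h]; linarith
    calc (1 + M) ^ t ≤ (2 * max 1 M) ^ t :=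
          Real.rpow_le_rpow (by linarith) h1 ht
      _ = 2 ^ t * (max 1 M) ^ t := Real.mul_rpow (by norm_num) (le_max_of_le_left one_pos.le)
      _ = 2 ^ t * max 1 (M ^ t) := by
          congr 1
          rcases le_total M 1 with h | h
          · rw [max_eq_left h, Real.one_rpow, max_eq_left (Real.rpow_le_one hMn h ht)]
          · rw [max_eq_right h, max_eq_right (Real.one_le_rpow h ht)]
  have hstep4 : max 1 (M ^ t) ≤ P r k := by
    have hMP : M ^ t ≤ P r k := by
      have hcase : M ≤ max (hnorm k.1) (vnorm k.2) := by
        have e1 : m1 ≤ hnorm k.1 := hnorm_ge_abs k.1 0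
        have e2 : m2 ≤ hnorm k.1 := hnorm_ge_abs k.1 1
        have e3 : m3 ≤ vnorm k.2 := vnorm_ge_abs k.2
        simp only [hM, max_le_iff]
        exact ⟨le_max_of_le_left e1, le_max_of_le_left e2, le_max_of_le_right e3⟩
      calc M ^ t ≤ (max (hnorm k.1) (vnorm k.2)) ^ t := Real.rpow_le_rpow hMn hcase ht
        _ ≤ hnorm k.1 ^ t + vnorm k.2 ^ t := by
            rcases le_total (hnorm k.1) (vnorm k.2) with h | h
            · rw [max_eq_right h]
              exact le_add_of_nonneg_left (Real.rpow_nonneg (hnorm_nonneg _) _)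
            · rw [max_eq_left h]
              exact le_add_of_nonneg_right (Real.rpow_nonneg (vnorm_nonneg _) _)
        _ ≤ P r k := by unfold P; rw [← htdef]; linarith
    exact max_le (P_one_le r k) hMP
  calc ((1 + m1) * (1 + m2) * (1 + m3)) ^ (t / 3)
      ≤ (1 + M) ^ t := hstep2
    _ ≤ 2 ^ t * max 1 (M ^ t) := hstep3
    _ ≤ 2 ^ t * P r k := by
        have h2 : (0:ℝ) ≤ 2 ^ t := Real.rpow_nonneg (by norm_num) _
        nlinarith [hstep4]

lemma P_inv_le (r : ℝ) (hr : 0 ≤ r) (k : Ix) :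
    (ENNReal.ofReal (P r k))⁻¹
      ≤ ENNReal.ofReal (2 ^ (2 * r)) * (g (2*r/3) (k.1 0) * g (2*r/3) (k.1 1) * g (2*r/3) k.2) := by
  set t := 2 * r with htdef
  set pr : ℝ := (1 + |(k.1 0 : ℝ)|) * (1 + |(k.1 1 : ℝ)|) * (1 + |(k.2 : ℝ)|) with hpr
  have hpr1 : (1:ℝ) ≤ pr := by
    rw [hpr]
    have a1 : (1:ℝ) ≤ 1 + |(k.1 0 : ℝ)| := by simp [abs_nonneg]
    have a2 : (1:ℝ) ≤ 1 + |(k.1 1 : ℝ)| := by simp [abs_nonneg]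
    have a3 : (1:ℝ) ≤ 1 + |(k.2 : ℝ)| := by simp [abs_nonneg]
    have h12 : (1:ℝ) ≤ (1 + |(k.1 0 : ℝ)|) * (1 + |(k.1 1 : ℝ)|) := by nlinarith
    nlinarith
  have hkey : 2 ^ (-t) * pr ^ (t/3) ≤ P r k := by
    have h := P_lower r hr k
    rw [← htdef] at h
    rw [← hpr] at h
    have hnn : (0:ℝ) ≤ 2 ^ (-t) := Real.rpow_nonneg (by norm_num) _
    calc 2 ^ (-t) * pr ^ (t/3) ≤ 2 ^ (-t) * (2 ^ t * P r k) :=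
          mul_le_mul_of_nonneg_left h hnn
      _ = (2:ℝ) ^ (-t + t) * P r k := by
          rw [← mul_assoc, ← Real.rpow_add (by norm_num : (0:ℝ) < 2)]
      _ = P r k := by norm_num
  have hQP : (0:ℝ) < 2 ^ (-t) * pr ^ (t/3) := by
    have := Real.rpow_pos_of_pos (lt_of_lt_of_le one_pos hpr1) (t/3)
    have := Real.rpow_pos_of_pos (by norm_num : (0:ℝ) < 2) (-t)
    positivity
  calc (ENNReal.ofReal (P r k))⁻¹
      ≤ (ENNReal.ofReal (2 ^ (-t) * pr ^ (t/3)))⁻¹ :=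
        ENNReal.inv_le_inv' (ENNReal.ofReal_le_ofReal hkey)
    _ = ENNReal.ofReal ((2 ^ (-t) * pr ^ (t/3))⁻¹) := (ENNReal.ofReal_inv_of_pos hQP).symm
    _ = ENNReal.ofReal (2 ^ t * pr ^ (-(t/3))) := by
        congr 1
        rw [mul_inv, ← Real.rpow_neg (by norm_num : (0:ℝ) ≤ 2), neg_neg,
          ← Real.rpow_neg (by linarith : (0:ℝ) ≤ pr)]
    _ = ENNReal.ofReal (2 ^ t) * (g (t/3) (k.1 0) * g (t/3) (k.1 1) * g (t/3) k.2) := by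
        rw [ENNReal.ofReal_mul (Real.rpow_nonneg (by norm_num) _)]
        congr 1
        unfold g
        rw [hpr, Real.mul_rpow (by positivity) (by positivity),
          Real.mul_rpow (by positivity) (by positivity),
          ENNReal.ofReal_mul (by positivity), ENNReal.ofReal_mul (by positivity)]
    _ = ENNReal.ofReal (2 ^ (2*r)) * (g (2*r/3) (k.1 0) * g (2*r/3) (k.1 1) * g (2*r/3) k.2) := by
        rw [htdef]

lemma S_lt_top (r : ℝ) (hr : 3/2 < r) :
    ∑' k : Ix, (ENNReal.ofReal (P r k))⁻¹ < ⊤ := by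
  have hr0 : 0 ≤ r := by linarith
  set s := 2 * r / 3 with hs
  have hs1 : 1 < s := by rw [hs]; linarith
  have hbound : ∑' k : Ix, (ENNReal.ofReal (P r k))⁻¹
      ≤ ENNReal.ofReal (2 ^ (2*r)) * ∑' k : Ix, (g s (k.1 0) * g s (k.1 1) * g s k.2) := by
    rw [← ENNReal.tsum_mul_left]
    exact ENNReal.tsum_le_tsum fun k => P_inv_le r hr0 k
  have hfact : ∑' k : Ix, (g s (k.1 0) * g s (k.1 1) * g s k.2)
      = (∑' n : ℤ, g s n) * (∑' n : ℤ, g s n) * (∑' n : ℤ, g s n) := by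
    rw [← (Equiv.prodCongr (piFinTwoEquiv fun _ => ℤ).symm
      (Equiv.refl ℤ)).tsum_eq (fun k => g s (k.1 0) * g s (k.1 1) * g s k.2)]
    have : ∀ p : (ℤ × ℤ) × ℤ,
        g s (((Equiv.prodCongr (piFinTwoEquiv fun _ => ℤ).symm (Equiv.refl ℤ)) p).1 0)
          * g s (((Equiv.prodCongr (piFinTwoEquiv fun _ => ℤ).symm (Equiv.refl ℤ)) p).1 1)
          * g s (((Equiv.prodCongr (piFinTwoEquiv fun _ => ℤ).symm (Equiv.refl ℤ)) p).2)
          = g s p.1.1 * g s p.1.2 * g s p.2 := by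
      intro p
      simp
    rw [tsum_congr this]
    rw [ENNReal.tsum_prod']
    have inner : ∀ x : ℤ × ℤ, ∑' n : ℤ, g s x.1 * g s x.2 * g s n
        = (g s x.1 * g s x.2) * ∑' n : ℤ, g s n := fun x => ENNReal.tsum_mul_left
    rw [tsum_congr inner, ENNReal.tsum_mul_right, ENNReal.tsum_prod']
    have inner2 : ∀ a : ℤ, ∑' b : ℤ, g s a * g s b = g s a * ∑' n : ℤ, g s n :=
      fun a => ENNReal.tsum_mul_left
    rw [tsum_congr inner2, ENNReal.tsum_mul_right]
  refine lt_of_le_of_lt hbound ?_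
  rw [hfact]
  have hG := G_lt_top hs1
  exact ENNReal.mul_lt_top ENNReal.ofReal_lt_top
    (ENNReal.mul_lt_top (ENNReal.mul_lt_top hG hG) hG)

/-! ### The norm identity and the convolution coefficient bound -/

lemma ofReal_norm_eq_coe_nnnorm (x : ℂ) : ENNReal.ofReal ‖x‖ = (‖x‖₊ : ℝ≥0∞) :=
  ENNReal.ofReal_eq_coe_nnreal (norm_nonneg _)

lemma anisoNorm_eq (τ γ r : ℝ) (c : Ix → ℂ) :
    anisoNorm τ γ r c = (∑' k, w τ γ r k * ((‖c k‖₊ : ℝ≥0∞)) ^ (2:ℝ)) ^ (1/2:ℝ) := by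
  unfold anisoNorm
  congr 1
  refine tsum_congr fun k => ?_
  have hre : (1 + hnorm k.1 ^ (2*r) + vnorm k.2 ^ (2*r)) * Real.exp (2*τ*hnorm k.1)
      * Real.exp (2*γ*vnorm k.2) * ‖c k‖^2 = (P r k * E τ γ k) * ‖c k‖^2 := by
    unfold P E
    ring
  rw [hre, ENNReal.ofReal_mul (mul_nonneg (P_pos r k).le (E_pos τ γ k).le)]
  unfold w
  congr 1
  rw [ENNReal.ofReal_pow (norm_nonneg _), ofReal_norm_eq_coe_nnnorm, ENNReal.rpow_two]

lemma fconv_nnnorm_le (c d : Ix → ℂ) (k : Ix) :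
    (‖fconv c d k‖₊ : ℝ≥0∞) ≤ ∑' j, (‖c j‖₊ : ℝ≥0∞) * (‖d (k - j)‖₊ : ℝ≥0∞) := by
  by_cases hs : Summable fun j => c j * d (k - j)
  · have hsum : Summable fun j : Ix => ‖c j * d (k - j)‖ := summable_norm_iff.mpr hs
    have hnorm : ‖fconv c d k‖ ≤ ∑' j, ‖c j * d (k - j)‖ :=
      norm_tsum_le_tsum_norm hsum
    calc (‖fconv c d k‖₊ : ℝ≥0∞) = ENNReal.ofReal ‖fconv c d k‖ :=
          (ofReal_norm_eq_coe_nnnorm _).symm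
      _ ≤ ENNReal.ofReal (∑' j, ‖c j * d (k - j)‖) := ENNReal.ofReal_le_ofReal hnorm
      _ = ∑' j, ENNReal.ofReal ‖c j * d (k - j)‖ :=
          ENNReal.ofReal_tsum_of_nonneg (fun _ => norm_nonneg _) hsum
      _ = ∑' j, (‖c j‖₊ : ℝ≥0∞) * (‖d (k - j)‖₊ : ℝ≥0∞) := by
          refine tsum_congr fun j => ?_
          rw [norm_mul, ENNReal.ofReal_mul (norm_nonneg _), ofReal_norm_eq_coe_nnnorm,
            ofReal_norm_eq_coe_nnnorm]
  · unfold fconv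
    rw [tsum_eq_zero_of_not_summable hs]
    simp

end AnisoAux

/-- Banach algebra property of the anisotropic Gevrey space for `r > 3/2`:
`‖fg‖_{τ,r,γ,r} ≤ C_r ‖f‖_{τ,r,γ,r} ‖g‖_{τ,r,γ,r}`. -/
theorem aniso_gevrey_banach_algebra (r : ℝ) (hr : 3 / 2 < r) :
    ∃ C : ℝ, 0 < C ∧ ∀ τ γ : ℝ, 0 ≤ τ → 0 ≤ γ → ∀ c d : (Fin 2 → ℤ) × ℤ → ℂ,
      anisoNorm τ γ r c < ⊤ → anisoNorm τ γ r d < ⊤ →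
      anisoNorm τ γ r (fconv c d)
        ≤ ENNReal.ofReal C * anisoNorm τ γ r c * anisoNorm τ γ r d := by
  classical
  open AnisoAux in
  have hr0 : (0:ℝ) ≤ r := by linarith
  set S : ℝ≥0∞ := ∑' k : Ix, (ENNReal.ofReal (P r k))⁻¹ with hS
  have hSlt : S < ⊤ := S_lt_top r hr
  set B : ℝ≥0∞ := ENNReal.ofReal (2 ^ (2*r)) with hB
  set K : ℝ≥0∞ := 6 * B * S with hK
  have hKlt : K < ⊤ := by
    rw [hK]
    exact ENNReal.mul_lt_top (ENNReal.mul_lt_top (by norm_num) ENNReal.ofReal_lt_top) hSlt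
  have hKh : K ^ (1/2:ℝ) ≠ ⊤ := by
    exact ENNReal.rpow_ne_top_of_nonneg (by norm_num) hKlt.ne
  set C : ℝ := (K ^ (1/2:ℝ)).toReal + 1 with hC
  have hCpos : 0 < C := by
    have := ENNReal.toReal_nonneg (a := K ^ (1/2:ℝ))
    rw [hC]; linarith
  refine ⟨C, hCpos, ?_⟩
  intro τ γ hτ hγ c d _ _
  set a : Ix → ℝ≥0∞ := fun k => (‖c k‖₊ : ℝ≥0∞) with ha
  set b : Ix → ℝ≥0∞ := fun k => (‖d k‖₊ : ℝ≥0∞) with hb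
  set Nc : ℝ≥0∞ := ∑' k, w τ γ r k * a k ^ (2:ℝ) with hNc
  set Nd : ℝ≥0∞ := ∑' k, w τ γ r k * b k ^ (2:ℝ) with hNd
  -- pointwise bound for the weighted convolution coefficient
  have pointwise : ∀ k : Ix, sw τ γ r k * (‖fconv c d k‖₊ : ℝ≥0∞)
      ≤ B ^ (1/2:ℝ) * ((∑' j, (sw τ γ r j * a j) * (su τ γ (k-j) * b (k-j)))
        + ∑' j, (su τ γ j * a j) * (sw τ γ r (k-j) * b (k-j))) := by
    intro k
    calc sw τ γ r k * (‖fconv c d k‖₊ : ℝ≥0∞)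
        ≤ sw τ γ r k * ∑' j, a j * b (k - j) :=
          mul_le_mul_right (fconv_nnnorm_le c d k) _
      _ = ∑' j, sw τ γ r k * (a j * b (k - j)) := ENNReal.tsum_mul_left.symm
      _ ≤ ∑' j, (B ^ (1/2:ℝ) * (sw τ γ r j * su τ γ (k-j) + su τ γ j * sw τ γ r (k-j)))
            * (a j * b (k - j)) :=
          ENNReal.tsum_le_tsum fun j => mul_le_mul_left (sw_split hr0 hτ hγ k j) _
      _ = B ^ (1/2:ℝ) * ((∑' j, (sw τ γ r j * a j) * (su τ γ (k-j) * b (k-j)))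
            + ∑' j, (su τ γ j * a j) * (sw τ γ r (k-j) * b (k-j))) := by
          rw [← ENNReal.tsum_add, ← ENNReal.tsum_mul_left]
          refine tsum_congr fun j => ?_
          ring
  -- the core quadratic estimate
  have core : (∑' k, w τ γ r k * ((‖fconv c d k‖₊ : ℝ≥0∞)) ^ (2:ℝ)) ≤ K * Nc * Nd := by
    have hXsq : ∑' k, (∑' j, (sw τ γ r j * a j) * (su τ γ (k-j) * b (k-j))) ^ (2:ℝ)
        ≤ (S * Nd) * Nc := by
      have hconv : ∀ k : Ix, (∑' j, (sw τ γ r j * a j) * (su τ γ (k-j) * b (k-j)))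
          = ∑' j, (su τ γ j * b j) * (sw τ γ r (k-j) * a (k-j)) := by
        intro k
        exact conv_comm (fun j => sw τ γ r j * a j) (fun j => su τ γ j * b j) k
      calc ∑' k, (∑' j, (sw τ γ r j * a j) * (su τ γ (k-j) * b (k-j))) ^ (2:ℝ)
          = ∑' k, (∑' j, (su τ γ j * b j) * (sw τ γ r (k-j) * a (k-j))) ^ (2:ℝ) := by
            exact tsum_congr fun k => by rw [hconv k]
        _ ≤ (∑' j, su τ γ j * b j) ^ (2:ℝ) * ∑' j, (sw τ γ r j * a j) ^ (2:ℝ) :=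
            conv_sq _ _
        _ ≤ (S * Nd) * Nc := by
            have h1 : (∑' j, su τ γ j * b j) ^ (2:ℝ) ≤ S * Nd := l1_bound b
            have h2 : (∑' j, (sw τ γ r j * a j) ^ (2:ℝ)) = Nc := by
              rw [hNc]
              refine tsum_congr fun j => ?_
              rw [ENNReal.mul_rpow_of_nonneg _ _ (by norm_num : (0:ℝ) ≤ 2), sw_sq]
            rw [h2]
            exact mul_le_mul_left h1 _
    have hYsq : ∑' k, (∑' j, (su τ γ j * a j) * (sw τ γ r (k-j) * b (k-j))) ^ (2:ℝ)
        ≤ (S * Nc) * Nd := by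
      calc ∑' k, (∑' j, (su τ γ j * a j) * (sw τ γ r (k-j) * b (k-j))) ^ (2:ℝ)
          ≤ (∑' j, su τ γ j * a j) ^ (2:ℝ) * ∑' j, (sw τ γ r j * b j) ^ (2:ℝ) :=
            conv_sq _ _
        _ ≤ (S * Nc) * Nd := by
            have h1 : (∑' j, su τ γ j * a j) ^ (2:ℝ) ≤ S * Nc := l1_bound a
            have h2 : (∑' j, (sw τ γ r j * b j) ^ (2:ℝ)) = Nd := by
              rw [hNd]
              refine tsum_congr fun j => ?_
              rw [ENNReal.mul_rpow_of_nonneg _ _ (by norm_num : (0:ℝ) ≤ 2), sw_sq]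
            rw [h2]
            exact mul_le_mul_left h1 _
    calc (∑' k, w τ γ r k * ((‖fconv c d k‖₊ : ℝ≥0∞)) ^ (2:ℝ))
        = ∑' k, (sw τ γ r k * (‖fconv c d k‖₊ : ℝ≥0∞)) ^ (2:ℝ) := by
          refine tsum_congr fun k => ?_
          rw [ENNReal.mul_rpow_of_nonneg _ _ (by norm_num : (0:ℝ) ≤ 2), sw_sq]
      _ ≤ ∑' k, (B ^ (1/2:ℝ) * ((∑' j, (sw τ γ r j * a j) * (su τ γ (k-j) * b (k-j)))
            + ∑' j, (su τ γ j * a j) * (sw τ γ r (k-j) * b (k-j)))) ^ (2:ℝ) :=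
          ENNReal.tsum_le_tsum fun k => ENNReal.rpow_le_rpow (pointwise k) (by norm_num)
      _ = B * ∑' k, ((∑' j, (sw τ γ r j * a j) * (su τ γ (k-j) * b (k-j)))
            + ∑' j, (su τ γ j * a j) * (sw τ γ r (k-j) * b (k-j))) ^ (2:ℝ) := by
          rw [← ENNReal.tsum_mul_left]
          refine tsum_congr fun k => ?_
          rw [ENNReal.mul_rpow_of_nonneg _ _ (by norm_num : (0:ℝ) ≤ 2), rpow_half_sq]
      _ ≤ B * ∑' k, 3 * ((∑' j, (sw τ γ r j * a j) * (su τ γ (k-j) * b (k-j))) ^ (2:ℝ)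
            + (∑' j, (su τ γ j * a j) * (sw τ γ r (k-j) * b (k-j))) ^ (2:ℝ)) := by
          refine mul_le_mul_right (ENNReal.tsum_le_tsum fun k => sq_add_le_three _ _) _
      _ = B * (3 * ((∑' k, (∑' j, (sw τ γ r j * a j) * (su τ γ (k-j) * b (k-j))) ^ (2:ℝ))
            + ∑' k, (∑' j, (su τ γ j * a j) * (sw τ γ r (k-j) * b (k-j))) ^ (2:ℝ))) := by
          rw [ENNReal.tsum_mul_left, ENNReal.tsum_add]
      _ ≤ B * (3 * ((S * Nd) * Nc + (S * Nc) * Nd)) := by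
          refine mul_le_mul_right (mul_le_mul_right (add_le_add hXsq hYsq) _) _
      _ = K * Nc * Nd := by
          rw [hK]
          ring
  -- conclude
  rw [anisoNorm_eq τ γ r (fconv c d), anisoNorm_eq τ γ r c, anisoNorm_eq τ γ r d]
  show (∑' k, w τ γ r k * ((‖fconv c d k‖₊ : ℝ≥0∞)) ^ (2:ℝ)) ^ (1/2:ℝ)
      ≤ ENNReal.ofReal C * Nc ^ (1/2:ℝ) * Nd ^ (1/2:ℝ)
  calc (∑' k, w τ γ r k * ((‖fconv c d k‖₊ : ℝ≥0∞)) ^ (2:ℝ)) ^ (1/2:ℝ)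
      ≤ (K * Nc * Nd) ^ (1/2:ℝ) := ENNReal.rpow_le_rpow core (by norm_num)
    _ = K ^ (1/2:ℝ) * Nc ^ (1/2:ℝ) * Nd ^ (1/2:ℝ) := by
        rw [ENNReal.mul_rpow_of_nonneg _ _ (by norm_num : (0:ℝ) ≤ 1/2),
          ENNReal.mul_rpow_of_nonneg _ _ (by norm_num : (0:ℝ) ≤ 1/2)]
    _ ≤ ENNReal.ofReal C * Nc ^ (1/2:ℝ) * Nd ^ (1/2:ℝ) := by
        have hKC : K ^ (1/2:ℝ) ≤ ENNReal.ofReal C := by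
          conv_lhs => rw [← ENNReal.ofReal_toReal hKh]
          exact ENNReal.ofReal_le_ofReal (by rw [hC]; linarith)
        exact mul_le_mul_left (mul_le_mul_left hKC _) _
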